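/- Fix n ∈ {1,…,N} and a natural number β ≥ 1. Regard the density ρ(x) = 1 − Σ_{m=0}^N S_m(x)^β as a function of the n-th site point x_n (all other data fixed). If x ≠ x_n, then this function is differentiable at x_n and its gradient equals −β·[S_0(x)^{β−1}·S_0(x)·S_n(x) + Σ_{m=1}^N S_m(x)^{β−1}·S_m(x)·(S_n(x) − δ_{mn})]·Y_n(x), where Y_n(x) = A_n(x_n − x)/d_n(x, x_n); that is, ∂ρ/∂x_n = −Σ_{m=0}^N β S_m(x)^{β−1} ∂S_m/∂x_n with ∂S_m/∂x_n = S_m(S_n − δ_{mn})Y_n for m ≥ 1 and ∂S_0/∂x_n = S_0 S_n Y_n. -/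

import Mathlib

open Matrix

/-- The anisotropic (Mahalanobis-type) length `sqrt(uᵀ A u)`. -/
noncomputable def mdist {d : ℕ} (A : Matrix (Fin d) (Fin d) ℝ) (u : Fin d → ℝ) : ℝ :=
  Real.sqrt (u ⬝ᵥ A.mulVec u)

/-- The denominator `ε_s + ∑_{k=1}^N exp(−d_k(x, x_k))` with `A_k = D_k D_kᵀ`. -/
noncomputable def Sden {d N : ℕ} (p : Fin N → Fin d → ℝ)
    (D : Fin N → Matrix (Fin d) (Fin d) ℝ) (ε : ℝ) (x : Fin d → ℝ) : ℝ :=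
  ε + ∑ k, Real.exp (-(mdist (D k * (D k)ᵀ) (x - p k)))

/-- `S_m(x) = exp(−d_m(x, x_m)) / (ε_s + ∑_k exp(−d_k(x, x_k)))` for `m = 1,…,N`. -/
noncomputable def S {d N : ℕ} (p : Fin N → Fin d → ℝ)
    (D : Fin N → Matrix (Fin d) (Fin d) ℝ) (ε : ℝ) (x : Fin d → ℝ) (m : Fin N) : ℝ :=
  Real.exp (-(mdist (D m * (D m)ᵀ) (x - p m))) / Sden p D ε x

/-- `S_0(x) = ε_s / (ε_s + ∑_k exp(−d_k(x, x_k)))`. -/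
noncomputable def S0 {d N : ℕ} (p : Fin N → Fin d → ℝ)
    (D : Fin N → Matrix (Fin d) (Fin d) ℝ) (ε : ℝ) (x : Fin d → ℝ) : ℝ :=
  ε / Sden p D ε x

/-- The density `ρ(x) = 1 − ∑_{m=0}^N S_m(x)^β`. -/
noncomputable def rho {d N : ℕ} (β : ℕ) (p : Fin N → Fin d → ℝ)
    (D : Fin N → Matrix (Fin d) (Fin d) ℝ) (ε : ℝ) (x : Fin d → ℝ) : ℝ :=
  1 - (S0 p D ε x ^ β + ∑ m, S p D ε x m ^ β)

noncomputable def dotCLM {d : ℕ} (u : Fin d → ℝ) : (Fin d → ℝ) →L[ℝ] ℝ :=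
  LinearMap.toContinuousLinearMap
    { toFun := fun w => u ⬝ᵥ w
      map_add' := fun a b => dotProduct_add u a b
      map_smul' := fun c a => by simp [dotProduct_smul] }

@[simp] lemma dotCLM_apply {d : ℕ} (u w : Fin d → ℝ) : dotCLM u w = u ⬝ᵥ w := rfl

lemma hasFDerivAt_quad {d : ℕ} (A : Matrix (Fin d) (Fin d) ℝ) (hA : Aᵀ = A)
    (x p0 : Fin d → ℝ) :
    HasFDerivAt (fun q => (x - q) ⬝ᵥ A.mulVec (x - q))
      ((-2 : ℝ) • dotCLM (A.mulVec (x - p0))) p0 := by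
  set M : (Fin d → ℝ) →L[ℝ] (Fin d → ℝ) := LinearMap.toContinuousLinearMap A.mulVecLin with hM
  have h1 : ∀ i : Fin d, HasFDerivAt (fun q : Fin d → ℝ => x i - q i)
      ((0 : (Fin d → ℝ) →L[ℝ] ℝ) - ContinuousLinearMap.proj i) p0 :=
    fun i => (hasFDerivAt_const (x i) p0).sub
      ((ContinuousLinearMap.proj i : (Fin d → ℝ) →L[ℝ] ℝ).hasFDerivAt)
  have h2 : ∀ i : Fin d, HasFDerivAt (fun q : Fin d → ℝ => (A.mulVec (x - q)) i)
      ((0 : (Fin d → ℝ) →L[ℝ] ℝ) -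
        (ContinuousLinearMap.proj i).comp M) p0 := by
    intro i
    have heq : (fun q : Fin d → ℝ => (A.mulVec (x - q)) i) =
        fun q => (A.mulVec x) i - ((ContinuousLinearMap.proj i).comp M) q := by
      funext q
      simp [Matrix.mulVec_sub, hM, Matrix.mulVecLin]
    rw [heq]
    exact (hasFDerivAt_const _ p0).sub
      (((ContinuousLinearMap.proj i).comp M).hasFDerivAt)
  have hsum : HasFDerivAt
      (fun q : Fin d → ℝ => ∑ i, (x i - q i) * (A.mulVec (x - q)) i)
      (∑ i, ((x i - p0 i) • ((0 : (Fin d → ℝ) →L[ℝ] ℝ) - (ContinuousLinearMap.proj i).comp M)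
        + ((A.mulVec (x - p0)) i) • ((0 : (Fin d → ℝ) →L[ℝ] ℝ) - ContinuousLinearMap.proj i)))
      p0 := HasFDerivAt.fun_sum (fun i _ => (h1 i).mul (h2 i))
  have hfun : (fun q : Fin d → ℝ => (x - q) ⬝ᵥ A.mulVec (x - q)) =
      fun q : Fin d → ℝ => ∑ i, (x i - q i) * (A.mulVec (x - q)) i := by
    funext q
    simp [dotProduct]
  rw [hfun]
  convert hsum using 1
  ext w
  simp only [ContinuousLinearMap.smul_apply, dotCLM_apply, ContinuousLinearMap.sum_apply,
    ContinuousLinearMap.add_apply, ContinuousLinearMap.sub_apply, ContinuousLinearMap.zero_apply,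
    ContinuousLinearMap.comp_apply, ContinuousLinearMap.proj_apply, smul_eq_mul]
  have hMw : M w = A.mulVec w := by simp [hM, Matrix.mulVecLin]
  rw [hMw]
  have hsymm : (x - p0) ⬝ᵥ A.mulVec w = (A.mulVec (x - p0)) ⬝ᵥ w := by
    rw [Matrix.dotProduct_mulVec, ← Matrix.vecMul_transpose, hA]
  have : ∑ i, ((x i - p0 i) * (0 - A.mulVec w i) + A.mulVec (x - p0) i * (0 - w i)) =
      -((x - p0) ⬝ᵥ A.mulVec w) - ((A.mulVec (x - p0)) ⬝ᵥ w) := by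
    have e1 : ∑ i, ((x i - p0 i) * (0 - A.mulVec w i) + A.mulVec (x - p0) i * (0 - w i)) =
        ∑ i, (-((x - p0) i * (A.mulVec w) i) + -((A.mulVec (x - p0)) i * w i)) :=
      Finset.sum_congr rfl fun i _ => by simp only [Pi.sub_apply]; ring
    rw [e1, Finset.sum_add_distrib, Finset.sum_neg_distrib, Finset.sum_neg_distrib]
    simp [dotProduct, sub_eq_add_neg]
  rw [this, hsymm]; ring

lemma hasFDerivAt_exp_neg_mdist {d : ℕ} (A : Matrix (Fin d) (Fin d) ℝ) (hA : Aᵀ = A)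
    (x p0 : Fin d → ℝ) (hpos : 0 < (x - p0) ⬝ᵥ A.mulVec (x - p0)) :
    HasFDerivAt (fun q => Real.exp (-(mdist A (x - q))))
      ((Real.exp (-(mdist A (x - p0))) * (mdist A (x - p0))⁻¹) •
        dotCLM (A.mulVec (x - p0))) p0 := by
  have hquad := hasFDerivAt_quad A hA x p0
  have hne : (x - p0) ⬝ᵥ A.mulVec (x - p0) ≠ 0 := ne_of_gt hpos
  have hg := (hquad.sqrt hne).neg.exp
  have hg0 : Real.sqrt ((x - p0) ⬝ᵥ A.mulVec (x - p0)) > 0 := Real.sqrt_pos.2 hpos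
  set t := (x - p0) ⬝ᵥ A.mulVec (x - p0) with ht
  set L := dotCLM (A.mulVec (x - p0)) with hL
  have hEq : (Real.exp (-(mdist A (x - p0))) * (mdist A (x - p0))⁻¹) • L =
      Real.exp (-Real.sqrt t) • -((1 / (2 * Real.sqrt t)) • (-2 : ℝ) • L) := by
    have hs : Real.sqrt t ≠ 0 := ne_of_gt hg0
    ext w
    simp only [ContinuousLinearMap.smul_apply, ContinuousLinearMap.neg_apply, smul_eq_mul,
      mdist, ← ht]
    field_simp
  rw [show (fun q => Real.exp (-(mdist A (x - q)))) =
      fun q => Real.exp (-Real.sqrt ((x - q) ⬝ᵥ A.mulVec (x - q))) from rfl, hEq]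
  exact hg

set_option maxHeartbeats 2000000 in
/-- Regarding `ρ(x) = 1 − ∑_{m=0}^N S_m(x)^β` as a function of the `n`-th site point
`x_n`, if `x ≠ x_n` then it is differentiable at `x_n` with gradient
`−β·[S_0^{β−1}·S_0·S_n + ∑_{m=1}^N S_m^{β−1}·S_m·(S_n − δ_{mn})]·Y_n(x)`,
where `Y_n(x) = A_n(x_n − x)/d_n(x, x_n)` (the gradient being expressed through the
Fréchet derivative `w ↦ ⟨grad, w⟩`). -/
theorem rho_differentiableAt_site {d N : ℕ} (β : ℕ) (hβ : 1 ≤ β)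
    (p : Fin N → Fin d → ℝ)
    (D : Fin N → Matrix (Fin d) (Fin d) ℝ) (hD : ∀ k, IsUnit (D k))
    (ε : ℝ) (hε : 0 ≤ ε) (x : Fin d → ℝ) (n : Fin N) (hx : x ≠ p n) :
    DifferentiableAt ℝ (fun q => rho β (Function.update p n q) D ε x) (p n) ∧
      ∀ w : Fin d → ℝ,
        fderiv ℝ (fun q => rho β (Function.update p n q) D ε x) (p n) w =
          -(β : ℝ) *
            (S0 p D ε x ^ (β - 1) * (S0 p D ε x * S p D ε x n) +
              ∑ m, S p D ε x m ^ (β - 1) *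
                (S p D ε x m * (S p D ε x n - if m = n then 1 else 0))) *
            (((mdist (D n * (D n)ᵀ) (x - p n))⁻¹ •
              (D n * (D n)ᵀ).mulVec (p n - x)) ⬝ᵥ w) := by

  classical
  set A := D n * (D n)ᵀ with hAdef
  have hAsymm : Aᵀ = A := by
    rw [hAdef, Matrix.transpose_mul, Matrix.transpose_transpose]
  have hv : x - p n ≠ 0 := sub_ne_zero.2 hx
  -- positivity of the quadratic form
  have hu : (x - p n) ᵥ* D n ≠ 0 := by
    intro h
    have hinj := Matrix.vecMul_injective_iff_isUnit.2 (hD n)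
    have : x - p n = 0 := by
      apply hinj
      simp [h]
    exact hv this
  have hpos : 0 < (x - p n) ⬝ᵥ A.mulVec (x - p n) := by
    have h1 : A.mulVec (x - p n) = (D n).mulVec ((D n)ᵀ.mulVec (x - p n)) := by
      rw [hAdef, ← Matrix.mulVec_mulVec]
    rw [h1, Matrix.dotProduct_mulVec, Matrix.mulVec_transpose]
    have := Matrix.dotProduct_self_star_pos_iff (v := (x - p n) ᵥ* D n)
    simpa using this.2 hu
  set g0 := mdist A (x - p n) with hg0def
  have hg0pos : 0 < g0 := Real.sqrt_pos.2 hpos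
  have hg0ne : g0 ≠ 0 := ne_of_gt hg0pos
  set f0 := Real.exp (-g0) with hf0def
  set L := dotCLM (A.mulVec (x - p n)) with hLdef
  have hF : HasFDerivAt (fun q => Real.exp (-(mdist A (x - q)))) ((f0 * g0⁻¹) • L) (p n) :=
    hasFDerivAt_exp_neg_mdist A hAsymm x (p n) hpos
  -- the denominator as a function of q
  set Sd := Sden p D ε x with hSddef
  have hSdpos : 0 < Sd := by
    have h1 : 0 < ∑ k, Real.exp (-(mdist (D k * (D k)ᵀ) (x - p k))) :=
      Finset.sum_pos (fun k _ => Real.exp_pos _) ⟨n, Finset.mem_univ n⟩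
    have := add_pos_of_nonneg_of_pos hε h1
    simpa [hSddef, Sden] using this
  have hSdne : Sd ≠ 0 := ne_of_gt hSdpos
  have hGfun : ∀ q, Sden (Function.update p n q) D ε x =
      Real.exp (-(mdist A (x - q))) +
        (ε + ∑ k ∈ Finset.univ.erase n, Real.exp (-(mdist (D k * (D k)ᵀ) (x - p k)))) := by
    intro q
    simp only [Sden]
    rw [← Finset.add_sum_erase _ _ (Finset.mem_univ n)]
    rw [Finset.sum_congr rfl (fun k hk => by
      rw [Function.update_of_ne (Finset.ne_of_mem_erase hk)])]
    rw [Function.update_self]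
    ring
  have hG : HasFDerivAt (fun q => Sden (Function.update p n q) D ε x) ((f0 * g0⁻¹) • L) (p n) := by
    rw [funext hGfun]
    exact hF.add_const _
  have hGval : Sden (Function.update p n (p n)) D ε x = Sd := by
    rw [Function.update_eq_self]
  set cInv : ℝ := -(Sd ^ 2)⁻¹ * (f0 * g0⁻¹) with hcInv
  have hGinv : HasFDerivAt (fun q => (Sden (Function.update p n q) D ε x)⁻¹) (cInv • L) (p n) := by
    have h := (hasDerivAt_inv hSdne).comp_hasFDerivAt_of_eq (p n) hG hGval.symm
    have : (-(Sd ^ 2)⁻¹) • ((f0 * g0⁻¹) • L) = cInv • L := by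
      rw [smul_smul, hcInv]
    rw [← this]
    exact h
  -- numerators
  set e : Fin N → ℝ := fun m => Real.exp (-(mdist (D m * (D m)ᵀ) (x - p m))) with hedef
  have hef : e n = f0 := rfl
  set b : Fin N → ℝ := fun m => e m * cInv + Sd⁻¹ * (if m = n then f0 * g0⁻¹ else 0) with hbdef
  have hSm : ∀ m : Fin N, HasFDerivAt (fun q => S (Function.update p n q) D ε x m)
      ((b m) • L) (p n) := by
    intro m
    have hfuneq : (fun q => S (Function.update p n q) D ε x m) =
        fun q => Real.exp (-(mdist (D m * (D m)ᵀ) (x - Function.update p n q m))) *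
          (Sden (Function.update p n q) D ε x)⁻¹ := by
      funext q; rw [S, div_eq_mul_inv]
    rw [hfuneq]
    have hEm : HasFDerivAt
        (fun q => Real.exp (-(mdist (D m * (D m)ᵀ) (x - Function.update p n q m))))
        ((if m = n then f0 * g0⁻¹ else 0) • L) (p n) := by
      by_cases hmn : m = n
      · subst hmn
        rw [if_pos rfl]
        have : (fun q => Real.exp (-(mdist (D m * (D m)ᵀ) (x - Function.update p m q m)))) =
            fun q => Real.exp (-(mdist A (x - q))) := by
          funext q; rw [Function.update_self, hAdef]
        rw [this]
        exact hF
      · rw [if_neg hmn]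
        have : (fun q => Real.exp (-(mdist (D m * (D m)ᵀ) (x - Function.update p n q m)))) =
            fun _ => e m := by
          funext q; rw [Function.update_of_ne hmn, hedef]
        rw [this, zero_smul]
        exact hasFDerivAt_const _ _
    have hprod := hEm.mul hGinv
    have hval1 : Real.exp (-(mdist (D m * (D m)ᵀ) (x - Function.update p n (p n) m))) = e m := by
      rw [Function.update_eq_self, hedef]
    rw [hval1, hGval] at hprod
    have : e m • (cInv • L) + Sd⁻¹ • ((if m = n then f0 * g0⁻¹ else 0) • L) = b m • L := by
      rw [smul_smul, smul_smul, ← add_smul, hbdef]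
    rw [← this]
    exact hprod
  -- S0 as a function of q
  have hS0f : HasFDerivAt (fun q => S0 (Function.update p n q) D ε x) ((ε * cInv) • L) (p n) := by
    have hfuneq : (fun q => S0 (Function.update p n q) D ε x) =
        fun q => ε * (Sden (Function.update p n q) D ε x)⁻¹ := by
      funext q; rw [S0, div_eq_mul_inv]
    rw [hfuneq]
    have := hGinv.const_mul ε
    rwa [smul_smul] at this
  -- powers
  have hS0val : S0 (Function.update p n (p n)) D ε x = S0 p D ε x := by
    rw [Function.update_eq_self]
  have hSmval : ∀ m, S (Function.update p n (p n)) D ε x m = S p D ε x m := by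
    intro m; rw [Function.update_eq_self]
  set c0 : ℝ := (β : ℝ) * S0 p D ε x ^ (β - 1) * (ε * cInv) with hc0
  have hpow0 : HasFDerivAt (fun q => S0 (Function.update p n q) D ε x ^ β) (c0 • L) (p n) := by
    have h := (hasDerivAt_pow β (S0 p D ε x)).comp_hasFDerivAt_of_eq (p n) hS0f hS0val.symm
    have : ((β : ℝ) * S0 p D ε x ^ (β - 1)) • ((ε * cInv) • L) = c0 • L := by
      rw [smul_smul, hc0]
    rw [← this]
    exact h
  set c1 : Fin N → ℝ := fun m => (β : ℝ) * S p D ε x m ^ (β - 1) * b m with hc1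
  have hpowm : ∀ m : Fin N, HasFDerivAt (fun q => S (Function.update p n q) D ε x m ^ β)
      ((c1 m) • L) (p n) := by
    intro m
    have h := (hasDerivAt_pow β (S p D ε x m)).comp_hasFDerivAt_of_eq (p n) (hSm m) (hSmval m).symm
    have : ((β : ℝ) * S p D ε x m ^ (β - 1)) • ((b m) • L) = c1 m • L := by
      rw [smul_smul, hc1]
    rw [← this]
    exact h
  have hsum : HasFDerivAt
      (fun q => S0 (Function.update p n q) D ε x ^ β +
        ∑ m, S (Function.update p n q) D ε x m ^ β)
      ((c0 + ∑ m, c1 m) • L) (p n) := by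
    have h := hpow0.add (HasFDerivAt.fun_sum (u := Finset.univ)
      (fun m _ => hpowm m))
    have : c0 • L + ∑ m, (c1 m) • L = (c0 + ∑ m, c1 m) • L := by
      rw [← Finset.sum_smul, ← add_smul]
    rw [← this]
    exact h
  have hrho : HasFDerivAt (fun q => rho β (Function.update p n q) D ε x)
      ((-(c0 + ∑ m, c1 m)) • L) (p n) := by
    have h := hsum.const_sub 1
    have hfuneq : (fun q => rho β (Function.update p n q) D ε x) =
        fun q => 1 - (S0 (Function.update p n q) D ε x ^ β +
          ∑ m, S (Function.update p n q) D ε x m ^ β) := by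
      funext q; rw [rho]
    rw [hfuneq, ← neg_smul] at *
    exact h
  refine ⟨hrho.differentiableAt, fun w => ?_⟩
  rw [hrho.fderiv]
  have hdot : ((mdist (D n * (D n)ᵀ) (x - p n))⁻¹ • (D n * (D n)ᵀ).mulVec (p n - x)) ⬝ᵥ w =
      -(g0⁻¹ * (A.mulVec (x - p n) ⬝ᵥ w)) := by
    rw [show p n - x = -(x - p n) from (neg_sub _ _).symm, Matrix.mulVec_neg]
    simp [smul_dotProduct, neg_dotProduct, hg0def, hAdef]
  rw [hdot]
  have happ : ((-(c0 + ∑ m, c1 m)) • L) w = (-(c0 + ∑ m, c1 m)) * (A.mulVec (x - p n) ⬝ᵥ w) := by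
    simp [hLdef]
  rw [happ]
  -- scalar identity
  have hS0e : S0 p D ε x = ε / Sd := rfl
  have hSe : ∀ m, S p D ε x m = e m / Sd := fun m => rfl
  have hterm : ∀ m : Fin N, c1 m =
      (-(g0⁻¹) * (β : ℝ)) * (S p D ε x m ^ (β - 1) *
        (S p D ε x m * (S p D ε x n - if m = n then 1 else 0))) := by
    intro m
    simp only [hc1, hbdef, hSe m, hSe n, hef, hcInv]
    by_cases hmn : m = n
    · simp only [hmn, if_pos]
      field_simp
      ring
    · simp only [hmn, if_neg, if_false]
      field_simp
      ring
  have hterm0 : c0 =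
      (-(g0⁻¹) * (β : ℝ)) * (S0 p D ε x ^ (β - 1) * (S0 p D ε x * S p D ε x n)) := by
    simp only [hc0, hS0e, hSe n, hef, hcInv]
    field_simp
  rw [hterm0, Finset.sum_congr rfl (fun m _ => hterm m), ← Finset.mul_sum]
  ring
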